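/- For all x ∈ (0, π/2], sin(2x)/(4x) + 1/2 - sin²(x)/x² ≤ 1 - sin(x)/x; i.e., the multi-projection error e_m(L, κ) is at most the one-time-projection error e_o(L, κ) whenever 0 < Lκ ≤ π/2. -/
import Mathlib


open Real

/-- For `x ∈ (0, π/2]`, the multi-projection error is at most the
one-time-projection error: `sin(2x)/(4x) + 1/2 - sin²x/x² ≤ 1 - sin x / x`. -/
theorem stmt_13 (x : ℝ) (hx : x ∈ Set.Ioc 0 (Real.pi / 2)) :
    Real.sin (2 * x) / (4 * x) + 1 / 2 - Real.sin x ^ 2 / x ^ 2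
      ≤ 1 - Real.sin x / x := by
  obtain ⟨hx0, hx2⟩ := hx
  have hpi := Real.pi_pos
  have hs : Real.sin x ≤ x := Real.sin_le hx0.le
  have hs0 : 0 ≤ Real.sin x :=
    Real.sin_nonneg_of_nonneg_of_le_pi hx0.le (by linarith)
  have hsx : x * Real.cos x ≤ Real.sin x := by
    rcases lt_or_eq_of_le hx2 with h | h
    · have hcpos : 0 < Real.cos x := Real.cos_pos_of_mem_Ioo ⟨by linarith, h⟩
      have ht := Real.lt_tan hx0 h
      rw [Real.tan_eq_sin_div_cos] at ht
      nlinarith [(lt_div_iff₀ hcpos).mp ht]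
    · rw [h]; simp
  rw [← sub_nonneg]
  have hne : x ≠ 0 := ne_of_gt hx0
  have heq : 1 - Real.sin x / x -
      (Real.sin (2 * x) / (4 * x) + 1 / 2 - Real.sin x ^ 2 / x ^ 2)
      = ((x - Real.sin x) ^ 2 + Real.sin x * (Real.sin x - x * Real.cos x))
        / (2 * x ^ 2) := by
    rw [Real.sin_two_mul]
    field_simp
    ring
  rw [heq]
  apply div_nonneg
  · nlinarith [sq_nonneg (x - Real.sin x)]
  · positivity
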